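/- Let H be a complex Hilbert space and A, B ∈ B(H) with 0 < b₁I ≤ A ≤ a₁I and 0 < b₂I ≤ B ≤ a₂I. Let f : (0,∞) → (0,∞) be an operator monotone function with f(1) = 1 and σ the associated operator mean. Then for every unit vector x ∈ H: ⟨Ax, x⟩ · ⟨|A^{−1/2}(A σ B)|² x, x⟩ − ⟨(A σ B)x, x⟩² ≤ (a₁²/4)(f(a₂b₁⁻¹) − f(b₂a₁⁻¹))². -/

import Mathlib

open scoped InnerProductSpace

noncomputable section

/-- The real power `A ^ r` of a (positive) operator, via the continuous functional calculus. -/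
noncomputable def opPow {H : Type} [NormedAddCommGroup H] [InnerProductSpace ℂ H]
    [CompleteSpace H] (A : H →L[ℂ] H) (r : ℝ) : H →L[ℂ] H :=
  cfc (fun t : ℝ => t ^ r) A

/-- The operator mean `A σ B = A^{1/2} f(A^{-1/2} B A^{-1/2}) A^{1/2}` associated with the
representing function `f`. -/
noncomputable def opMean {H : Type} [NormedAddCommGroup H] [InnerProductSpace ℂ H]
    [CompleteSpace H] (f : ℝ → ℝ) (A B : H →L[ℂ] H) : H →L[ℂ] H :=
  opPow A (1/2) * cfc f (opPow A (-(1/2)) * B * opPow A (-(1/2))) * opPow A (1/2)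

/-- The weighted geometric mean `A #_α B = A^{1/2} (A^{-1/2} B A^{-1/2})^α A^{1/2}`. -/
noncomputable def geoMean {H : Type} [NormedAddCommGroup H] [InnerProductSpace ℂ H]
    [CompleteSpace H] (α : ℝ) (A B : H →L[ℂ] H) : H →L[ℂ] H :=
  opMean (fun t : ℝ => t ^ α) A B

/-- `f : (0,∞) → (0,∞)` is operator monotone: for all positive invertible operators `X ≤ Y`
(on any complex Hilbert space), `f(X) ≤ f(Y)` in the Loewner order. -/
def IsOperatorMonotone (f : ℝ → ℝ) : Prop :=
  ∀ (H : Type) [NormedAddCommGroup H] [InnerProductSpace ℂ H] [CompleteSpace H]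
    (X Y : H →L[ℂ] H), 0 ≤ X → IsUnit X → 0 ≤ Y → IsUnit Y → X ≤ Y →
      cfc f X ≤ cfc f Y

namespace OzkH
variable {H : Type} [NormedAddCommGroup H] [InnerProductSpace ℂ H] [CompleteSpace H]

lemma re_inner_nonneg {T : H →L[ℂ] H} (h : 0 ≤ T) (x : H) : 0 ≤ (⟪T x, x⟫_ℂ).re := by
  have := ((ContinuousLinearMap.nonneg_iff_isPositive T).mp h).inner_nonneg_left x
  simpa [ContinuousLinearMap.reApplyInnerSelf] using (RCLike.nonneg_iff.mp this).1

lemma re_inner_mono {T₁ T₂ : H →L[ℂ] H} (h : T₁ ≤ T₂) (x : H) :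
    (⟪T₁ x, x⟫_ℂ).re ≤ (⟪T₂ x, x⟫_ℂ).re := by
  have h' := re_inner_nonneg (sub_nonneg.mpr h) x
  rw [ContinuousLinearMap.sub_apply, inner_sub_left] at h'
  simpa using h'

omit [CompleteSpace H] in
lemma re_inner_smul_left (r : ℝ) (u v : H) : (⟪(r • u : H), v⟫_ℂ).re = r * (⟪u, v⟫_ℂ).re := by
  have : (r • u : H) = ((r : ℂ) • u) := by
    simp [Complex.coe_smul]
  rw [this, inner_smul_left]
  simp

omit [CompleteSpace H] in
lemma re_inner_self (v : H) : (⟪v, v⟫_ℂ).re = ‖v‖ ^ 2 := by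
  simpa using inner_self_eq_norm_sq (𝕜 := ℂ) (x := v)

lemma algMap_nonneg {c : ℝ} (hc : 0 ≤ c) : 0 ≤ algebraMap ℝ (H →L[ℂ] H) c := by
  rw [← cfc_const c (1 : H →L[ℂ] H)]
  exact cfc_nonneg fun x _ => hc

lemma algMap_apply (c : ℝ) (v : H) : (algebraMap ℝ (H →L[ℂ] H) c) v = c • v := by
  rw [Algebra.algebraMap_eq_smul_one]
  rfl

lemma sa_inner_move {T : H →L[ℂ] H} (hT : IsSelfAdjoint T) (u v : H) :
    ⟪T u, v⟫_ℂ = ⟪u, T v⟫_ℂ := by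
  conv_lhs => rw [← hT.star_eq]
  rw [ContinuousLinearMap.star_eq_adjoint, ContinuousLinearMap.adjoint_inner_left]

end OzkH

set_option maxHeartbeats 1000000 in
/-- **Corollary 3.11**: the vector-state version of the generalized
Ozeki–Izumino–Mori–Seo inequality. -/
theorem stmt_12 {H : Type} [NormedAddCommGroup H] [InnerProductSpace ℂ H] [CompleteSpace H]
    (A B : H →L[ℂ] H) (a₁ b₁ a₂ b₂ : ℝ)
    (hb₁ : 0 < b₁) (hb₂ : 0 < b₂)
    (hA₁ : b₁ • (1 : H →L[ℂ] H) ≤ A) (hA₂ : A ≤ a₁ • (1 : H →L[ℂ] H))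
    (hB₁ : b₂ • (1 : H →L[ℂ] H) ≤ B) (hB₂ : B ≤ a₂ • (1 : H →L[ℂ] H))
    (f : ℝ → ℝ) (hf_pos : ∀ x : ℝ, 0 < x → 0 < f x) (hf_one : f 1 = 1)
    (hf_mono : IsOperatorMonotone f)
    (x : H) (hx : ‖x‖ = 1) :
    (⟪A x, x⟫_ℂ).re *
        (⟪(star (opPow A (-(1/2)) * opMean f A B) * (opPow A (-(1/2)) * opMean f A B)) x,
            x⟫_ℂ).re -
        ((⟪(opMean f A B) x, x⟫_ℂ).re) ^ 2 ≤
      a₁ ^ 2 / 4 * (f (a₂ * b₁⁻¹) - f (b₂ * a₁⁻¹)) ^ 2 := by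
  have h1nn : (0 : H →L[ℂ] H) ≤ b₁ • 1 := by
    rw [← Algebra.algebraMap_eq_smul_one]
    exact OzkH.algMap_nonneg hb₁.le
  have h2nn : (0 : H →L[ℂ] H) ≤ b₂ • 1 := by
    rw [← Algebra.algebraMap_eq_smul_one]
    exact OzkH.algMap_nonneg hb₂.le
  have hA0 : (0 : H →L[ℂ] H) ≤ A := h1nn.trans hA₁
  have hB0 : (0 : H →L[ℂ] H) ≤ B := h2nn.trans hB₁
  have hA_sa : IsSelfAdjoint A := .of_nonneg hA0
  have hA₁' : algebraMap ℝ (H →L[ℂ] H) b₁ ≤ A := by rw [Algebra.algebraMap_eq_smul_one]; exact hA₁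
  have hA₂' : A ≤ algebraMap ℝ (H →L[ℂ] H) a₁ := by rw [Algebra.algebraMap_eq_smul_one]; exact hA₂
  have spec_lb : ∀ t ∈ spectrum ℝ A, b₁ ≤ t :=
    (algebraMap_le_iff_le_spectrum hA_sa).mp hA₁'
  have spec_ub : ∀ t ∈ spectrum ℝ A, t ≤ a₁ :=
    (le_algebraMap_iff_spectrum_le hA_sa).mp hA₂'
  have spec_pos : ∀ t ∈ spectrum ℝ A, 0 < t := fun t ht => hb₁.trans_le (spec_lb t ht)
  -- scalar comparisons via the unit vector x
  have eval_smul : ∀ c : ℝ, (⟪(c • (1 : H →L[ℂ] H)) x, x⟫_ℂ).re = c := by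
    intro c
    rw [ContinuousLinearMap.smul_apply, ContinuousLinearMap.one_apply,
      OzkH.re_inner_smul_left, OzkH.re_inner_self, hx]
    norm_num
  have hb₁a₁ : b₁ ≤ a₁ := by
    have h := OzkH.re_inner_mono (hA₁.trans hA₂) x
    rwa [eval_smul, eval_smul] at h
  have hb₂a₂ : b₂ ≤ a₂ := by
    have h := OzkH.re_inner_mono (hB₁.trans hB₂) x
    rwa [eval_smul, eval_smul] at h
  have ha₁ : 0 < a₁ := hb₁.trans_le hb₁a₁
  have ha₂ : 0 < a₂ := hb₂.trans_le hb₂a₂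
  -- continuity facts on the spectrum of A
  have hc_half : ContinuousOn (fun t : ℝ => t ^ (1/2 : ℝ)) (spectrum ℝ A) := fun t ht =>
    (Real.continuousAt_rpow_const t _ (Or.inl (spec_pos t ht).ne')).continuousWithinAt
  have hc_mhalf : ContinuousOn (fun t : ℝ => t ^ (-(1/2) : ℝ)) (spectrum ℝ A) := fun t ht =>
    (Real.continuousAt_rpow_const t _ (Or.inl (spec_pos t ht).ne')).continuousWithinAt
  set S := opPow A (1/2) with hS_def
  set Si := opPow A (-(1/2)) with hSi_def
  have hS_sa : IsSelfAdjoint S := cfc_predicate _ A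
  have hSi_sa : IsSelfAdjoint Si := cfc_predicate _ A
  have hSS : S * S = A := by
    rw [hS_def, opPow, ← cfc_mul _ _ A hc_half hc_half]
    have he : (spectrum ℝ A).EqOn (fun t => t ^ (1/2 : ℝ) * t ^ (1/2 : ℝ)) id := by
      intro t ht
      have h0 := spec_pos t ht
      simp only [id_eq]
      rw [← Real.rpow_add h0]
      norm_num
    rw [cfc_congr he, cfc_id ℝ A hA_sa]
  have hSiS : Si * S = 1 := by
    rw [hS_def, hSi_def, opPow, opPow, ← cfc_mul _ _ A hc_mhalf hc_half]
    have he : (spectrum ℝ A).EqOn (fun t => t ^ (-(1/2) : ℝ) * t ^ (1/2 : ℝ))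
        (fun _ => (1 : ℝ)) := by
      intro t ht
      have h0 := spec_pos t ht
      simp only
      rw [← Real.rpow_add h0]
      norm_num
    rw [cfc_congr he, cfc_const 1 A hA_sa, map_one]
  -- the conjugated operator
  set T := Si * B * Si with hT_def
  have hT0 : (0 : H →L[ℂ] H) ≤ T := by
    have h := star_left_conjugate_le_conjugate hB0 Si
    rw [hSi_sa.star_eq] at h
    simpa [hT_def] using h
  have hT_sa : IsSelfAdjoint T := .of_nonneg hT0
  have hconj_eq : ∀ c : ℝ, Si * (c • (1 : H →L[ℂ] H)) * Si
      = cfc (fun t : ℝ => c * t⁻¹) A := by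
    intro c
    have h1 : c • (1 : H →L[ℂ] H) = cfc (fun _ : ℝ => c) A := by
      rw [cfc_const c A hA_sa, Algebra.algebraMap_eq_smul_one]
    rw [h1, hSi_def, opPow, ← cfc_mul _ _ A hc_mhalf continuousOn_const,
      ← cfc_mul (fun x : ℝ => x ^ (-(1/2) : ℝ) * c) _ A (hc_mhalf.mul continuousOn_const) hc_mhalf]
    apply cfc_congr
    intro t ht
    have h0 := spec_pos t ht
    simp only
    rw [mul_comm (t ^ (-(1/2) : ℝ)) c, mul_assoc, ← Real.rpow_add h0]
    norm_num [Real.rpow_neg_one]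
  have hT_lb : algebraMap ℝ (H →L[ℂ] H) (b₂ * a₁⁻¹) ≤ T := by
    have h2 : Si * (b₂ • 1) * Si ≤ T := by
      have h := star_left_conjugate_le_conjugate hB₁ Si
      rwa [hSi_sa.star_eq] at h
    rw [hconj_eq b₂] at h2
    refine le_trans ?_ h2
    refine (algebraMap_le_cfc_iff _ _ A
      (continuousOn_const.mul (fun t ht => (continuousAt_inv₀ (spec_pos t ht).ne').continuousWithinAt))
      hA_sa).mpr fun t ht => ?_
    have h0 := spec_pos t ht
    have h1 := spec_ub t ht
    have : a₁⁻¹ ≤ t⁻¹ := by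
      rw [inv_le_inv₀ ha₁ h0]; exact h1
    exact mul_le_mul_of_nonneg_left this hb₂.le
  have hT_ub : T ≤ algebraMap ℝ (H →L[ℂ] H) (a₂ * b₁⁻¹) := by
    have h2 : T ≤ Si * (a₂ • 1) * Si := by
      have h := star_left_conjugate_le_conjugate hB₂ Si
      rwa [hSi_sa.star_eq] at h
    rw [hconj_eq a₂] at h2
    refine h2.trans ?_
    refine (cfc_le_algebraMap_iff _ _ A
      (continuousOn_const.mul (fun t ht => (continuousAt_inv₀ (spec_pos t ht).ne').continuousWithinAt))
      hA_sa).mpr fun t ht => ?_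
    have h0 := spec_pos t ht
    have h1 := spec_lb t ht
    have : t⁻¹ ≤ b₁⁻¹ := by
      rw [inv_le_inv₀ h0 hb₁]; exact h1
    exact mul_le_mul_of_nonneg_left this ha₂.le
  have hmc : 0 < b₂ * a₁⁻¹ := by positivity
  have hMc : 0 < a₂ * b₁⁻¹ := by positivity
  have hu_unit : ∀ {c : ℝ}, 0 < c → IsUnit (algebraMap ℝ (H →L[ℂ] H) c) := fun {c} hc =>
    (isUnit_iff_ne_zero.mpr hc.ne').map (algebraMap ℝ (H →L[ℂ] H))
  have hT_unit : IsUnit T :=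
    CStarAlgebra.isUnit_of_le _ hT_lb ⟨OzkH.algMap_nonneg hmc.le, hu_unit hmc⟩
  set D := cfc f T with hD_def
  have hD_sa : IsSelfAdjoint D := cfc_predicate _ T
  set m := f (b₂ * a₁⁻¹) with hm_def
  set M := f (a₂ * b₁⁻¹) with hM_def
  have hD_lb : algebraMap ℝ (H →L[ℂ] H) m ≤ D := by
    have h := hf_mono H (algebraMap ℝ (H →L[ℂ] H) (b₂ * a₁⁻¹)) T (OzkH.algMap_nonneg hmc.le) (hu_unit hmc)
      hT0 hT_unit hT_lb
    rwa [cfc_algebraMap] at h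
  have hD_ub : D ≤ algebraMap ℝ (H →L[ℂ] H) M := by
    have h := hf_mono H T (algebraMap ℝ (H →L[ℂ] H) (a₂ * b₁⁻¹)) hT0 hT_unit (OzkH.algMap_nonneg hMc.le)
      (hu_unit hMc) hT_ub
    rwa [cfc_algebraMap] at h
  have hm_pos : 0 < m := hf_pos _ hmc
  have eval_u : ∀ (c : ℝ) (v : H), (⟪(algebraMap ℝ (H →L[ℂ] H) c) v, v⟫_ℂ).re = c * ‖v‖ ^ 2 := by
    intro c v
    rw [OzkH.algMap_apply, OzkH.re_inner_smul_left, OzkH.re_inner_self]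
  have hmM : m ≤ M := by
    have h := OzkH.re_inner_mono (hD_lb.trans hD_ub) x
    rw [eval_u, eval_u, hx] at h
    simpa using h
  by_cases hfc : ContinuousOn f (spectrum ℝ T)
  case neg =>
    exfalso
    have hD0 : D = 0 := by rw [hD_def, cfc_apply_of_not_continuousOn T hfc]
    have h := OzkH.re_inner_mono hD_lb x
    rw [eval_u, hx, hD0] at h
    simp at h
    nlinarith
  case pos =>
    have spm : ∀ t ∈ spectrum ℝ T, m ≤ f t :=
      (algebraMap_le_cfc_iff f m T hfc hT_sa).mp hD_lb
    have spM : ∀ t ∈ spectrum ℝ T, f t ≤ M :=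
      (cfc_le_algebraMap_iff f M T hfc hT_sa).mp hD_ub
    have hprod : (0 : H →L[ℂ] H) ≤ (algebraMap ℝ (H →L[ℂ] H) M - D) * (D - algebraMap ℝ (H →L[ℂ] H) m) := by
      have e1 : algebraMap ℝ (H →L[ℂ] H) M - D = cfc (fun t => M - f t) T := by
        rw [cfc_sub _ _ T continuousOn_const hfc, cfc_const M T hT_sa]
      have e2 : D - algebraMap ℝ (H →L[ℂ] H) m = cfc (fun t => f t - m) T := by
        rw [cfc_sub _ _ T hfc continuousOn_const, cfc_const m T hT_sa]
      rw [e1, e2, ← cfc_mul (fun t => M - f t) (fun t => f t - m) T (continuousOn_const.sub hfc) (hfc.sub continuousOn_const)]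
      exact cfc_nonneg fun t ht =>
        mul_nonneg (sub_nonneg.mpr (spM t ht)) (sub_nonneg.mpr (spm t ht))
    have key : D * D ≤ algebraMap ℝ (H →L[ℂ] H) M * D + D * algebraMap ℝ (H →L[ℂ] H) m - algebraMap ℝ (H →L[ℂ] H) M * algebraMap ℝ (H →L[ℂ] H) m := by
      have hexp : (algebraMap ℝ (H →L[ℂ] H) M - D) * (D - algebraMap ℝ (H →L[ℂ] H) m)
          = algebraMap ℝ (H →L[ℂ] H) M * D + D * algebraMap ℝ (H →L[ℂ] H) m - algebraMap ℝ (H →L[ℂ] H) M * algebraMap ℝ (H →L[ℂ] H) m - D * D := by noncomm_ring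
      rw [hexp] at hprod
      exact sub_nonneg.mp hprod
    have key2 : D * D ≤ algebraMap ℝ (H →L[ℂ] H) M * D + algebraMap ℝ (H →L[ℂ] H) m * D - algebraMap ℝ (H →L[ℂ] H) M * algebraMap ℝ (H →L[ℂ] H) m := by
      rwa [← Algebra.commutes m D] at key
    set y := S x with hy_def
    have move : ∀ w v : H, ⟪S w, v⟫_ℂ = ⟪w, S v⟫_ℂ := OzkH.sa_inner_move hS_sa
    have moveD : ∀ w v : H, ⟪D w, v⟫_ℂ = ⟪w, D v⟫_ℂ := OzkH.sa_inner_move hD_sa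
    have hA_eval : (⟪A x, x⟫_ℂ).re = ‖y‖ ^ 2 := by
      rw [← hSS]
      have e : (S * S) x = S y := rfl
      rw [e, move y x, ← hy_def, OzkH.re_inner_self]
    have hmean : opMean f A B = S * D * S := rfl
    have hval2 : (⟪(opMean f A B) x, x⟫_ℂ).re = (⟪D y, y⟫_ℂ).re := by
      rw [hmean]
      have e : (S * D * S) x = S (D y) := rfl
      rw [e, move (D y) x, ← hy_def]
    have hDS : Si * opMean f A B = D * S := by
      rw [hmean, ← mul_assoc, ← mul_assoc, hSiS, one_mul]
    have hval3 : (⟪(star (Si * opMean f A B) * (Si * opMean f A B)) x, x⟫_ℂ).re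
        = ‖D y‖ ^ 2 := by
      rw [hDS, star_mul, hS_sa.star_eq, hD_sa.star_eq]
      have e : ((S * D) * (D * S)) x = S (D (D y)) := rfl
      rw [e, move (D (D y)) x, ← hy_def, moveD (D y) y, OzkH.re_inner_self]
    set n := ‖y‖ ^ 2 with hn_def
    set tt := (⟪D y, y⟫_ℂ).re with htt_def
    have hn0 : (0 : ℝ) ≤ n := by positivity
    have hn_ub : n ≤ a₁ := by
      have h := OzkH.re_inner_mono hA₂ x
      rw [hA_eval, eval_smul] at h
      exact h
    have ht_lb : m * n ≤ tt := by
      have h := OzkH.re_inner_mono hD_lb y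
      rwa [eval_u] at h
    have ht_ub : tt ≤ M * n := by
      have h := OzkH.re_inner_mono hD_ub y
      rwa [eval_u] at h
    have hkey : ‖D y‖ ^ 2 ≤ M * tt + m * tt - M * (m * n) := by
      have h := OzkH.re_inner_mono key2 y
      have eDD : (D * D) y = D (D y) := rfl
      have eR : (algebraMap ℝ (H →L[ℂ] H) M * D + algebraMap ℝ (H →L[ℂ] H) m * D - algebraMap ℝ (H →L[ℂ] H) M * algebraMap ℝ (H →L[ℂ] H) m) y
          = M • D y + m • D y - M • (m • y) := by
        simp [ContinuousLinearMap.add_apply, ContinuousLinearMap.sub_apply,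
          ContinuousLinearMap.mul_apply, OzkH.algMap_apply, smul_comm m M y]
      rw [eDD, eR, moveD (D y) y] at h
      rw [inner_sub_left, inner_add_left, Complex.sub_re, Complex.add_re,
        OzkH.re_inner_smul_left, OzkH.re_inner_smul_left, OzkH.re_inner_smul_left,
        OzkH.re_inner_smul_left, OzkH.re_inner_self, ← htt_def] at h
      rw [OzkH.re_inner_self] at h
      rw [← hn_def] at h
      exact h
    rw [hA_eval, hval2, hval3]
    have hsq : 0 ≤ (tt - n * (M + m) / 2) ^ 2 := sq_nonneg _
    have hfac : 0 ≤ (a₁ - n) * (a₁ + n) * (M - m) ^ 2 :=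
      mul_nonneg (mul_nonneg (by linarith) (by linarith)) (sq_nonneg _)
    nlinarith [mul_le_mul_of_nonneg_left hkey hn0, sq_nonneg (M - m), hm_pos]
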